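/- Let $(\mathcal{E},[\cdot,\cdot],\mathcal{B})$ be a symplectic Leibniz algebra. Then there exists a paracomplex structure $E$ such that $(\mathcal{E},\mathcal{B},E)$ is a para-Kähler Leibniz algebra if and only if $\mathcal{E} = \mathcal{E}_+\oplus\mathcal{E}_-$ as vector spaces, where $\mathcal{E}_+$ and $\mathcal{E}_-$ are Leibniz subalgebras that are isotropic with respect to $\mathcal{B}$. -/

import Mathlib

/-- A symplectic Leibniz algebra admits a paracomplex structure making it
para-Kähler iff it is the direct sum of two isotropic subalgebras. -/
theorem stmt16 {K E : Type*} [Field K] [CharZero K] [AddCommGroup E] [Module K E]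
    [FiniteDimensional K E]
    (br : E →ₗ[K] E →ₗ[K] E)
    (hbr : ∀ x y z : E, br x (br y z) = br (br x y) z + br y (br x z))
    (B : E →ₗ[K] E →ₗ[K] K)
    (hsym : ∀ x y : E, B x y = B y x)
    (hnd : ∀ x : E, (∀ y : E, B x y = 0) → x = 0)
    (hsymp : ∀ x y z : E, B z (br x y) = -B y (br x z) + B x (br y z) + B x (br z y)) :
    (∃ P : Module.End K E, P * P = 1 ∧
      (∀ x y : E, P (br x y) = br (P x) y + br x (P y) - P (br (P x) (P y))) ∧
      Module.finrank K (LinearMap.ker (P - 1)) = Module.finrank K (LinearMap.ker (P + 1)) ∧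
      (∀ x y : E, B (P x) (P y) = -B x y))
    ↔ ∃ p q : Submodule K E, IsCompl p q ∧
        (∀ x ∈ p, ∀ y ∈ p, br x y ∈ p) ∧ (∀ x ∈ q, ∀ y ∈ q, br x y ∈ q) ∧
        (∀ x ∈ p, ∀ y ∈ p, B x y = 0) ∧ (∀ x ∈ q, ∀ y ∈ q, B x y = 0) := by
  have h2 : (2 : K) ≠ 0 := two_ne_zero
  have htf : ∀ x : E, x + x = 0 → x = 0 := by
    intro x hx
    have : (2 : K) • x = 0 := by rw [two_smul]; exact hx
    exact (smul_eq_zero.mp this).resolve_left h2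
  constructor
  · rintro ⟨P, hP2, hprod, -, hBP⟩
    have hPP : ∀ x : E, P (P x) = x := fun x => by
      have := LinearMap.ext_iff.mp hP2 x
      simpa [Module.End.mul_apply] using this
    have hmem1 : ∀ x : E, x ∈ LinearMap.ker (P - 1) ↔ P x = x := fun x => by
      simp [LinearMap.mem_ker, sub_eq_zero]
    have hmem2 : ∀ x : E, x ∈ LinearMap.ker (P + 1) ↔ P x = -x := fun x => by
      simp [LinearMap.mem_ker, add_eq_zero_iff_eq_neg]
    have hcancel : ∀ u v : E, u + u = v + v → u = v := by
      intro u v huv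
      have : (u - v) + (u - v) = 0 := by
        have : u + u - (v + v) = 0 := by rw [huv]; abel
        calc (u - v) + (u - v) = u + u - (v + v) := by abel
        _ = 0 := this
      have := htf _ this
      exact sub_eq_zero.mp this
    refine ⟨LinearMap.ker (P - 1), LinearMap.ker (P + 1), ⟨?_, ?_⟩, ?_, ?_, ?_, ?_⟩
    · rw [Submodule.disjoint_def]
      intro x h1x h2x
      have e1 := (hmem1 x).mp h1x
      have e2 := (hmem2 x).mp h2x
      have hxx : x = -x := e1.symm.trans e2
      refine htf x ?_
      nth_rewrite 2 [hxx]
      simp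
    · rw [codisjoint_iff, eq_top_iff]
      intro x _
      rw [Submodule.mem_sup]
      refine ⟨(2:K)⁻¹ • (x + P x), ?_, (2:K)⁻¹ • (x - P x), ?_, ?_⟩
      · rw [hmem1]
        rw [map_smul, map_add, hPP]
        congr 1
        abel
      · rw [hmem2]
        rw [map_smul, map_sub, hPP]
        rw [← smul_neg]
        congr 1
        abel
      · rw [← smul_add]
        have : x + P x + (x - P x) = (2:K) • x := by rw [two_smul]; abel
        rw [this, smul_smul, inv_mul_cancel₀ h2, one_smul]
    · intro x hx y hy
      have e1 := (hmem1 x).mp hx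
      have e2 := (hmem1 y).mp hy
      have h := hprod x y
      rw [e1, e2] at h
      rw [hmem1]
      exact hcancel _ _ (eq_sub_iff_add_eq.mp h)
    · intro x hx y hy
      have e1 := (hmem2 x).mp hx
      have e2 := (hmem2 y).mp hy
      have h := hprod x y
      rw [e1, e2] at h
      simp only [map_neg, LinearMap.neg_apply, neg_neg] at h
      rw [hmem2]
      exact hcancel _ _ ((eq_sub_iff_add_eq.mp h).trans (by abel))
    · intro x hx y hy
      have e1 := (hmem1 x).mp hx
      have e2 := (hmem1 y).mp hy
      have h := hBP x y
      rw [e1, e2] at h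
      linear_combination h / 2
    · intro x hx y hy
      have e1 := (hmem2 x).mp hx
      have e2 := (hmem2 y).mp hy
      have h := hBP x y
      rw [e1, e2] at h
      simp only [map_neg, LinearMap.neg_apply, neg_neg] at h
      linear_combination h / 2
  · rintro ⟨p, q, hc, hp, hq, hBp, hBq⟩
    set π₁ := p.projectionOnto q hc with hπ₁
    set π₂ := q.projectionOnto p hc.symm with hπ₂
    set P : Module.End K E := p.subtype ∘ₗ π₁ - q.subtype ∘ₗ π₂ with hPdef
    have hPa : ∀ a ∈ p, P a = a := by
      intro a ha
      simp only [hPdef, LinearMap.sub_apply, LinearMap.comp_apply, Submodule.coe_subtype]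
      rw [show a = ((⟨a, ha⟩ : p) : E) from rfl,
        Submodule.projectionOnto_apply_left hc,
        Submodule.projectionOnto_apply_right hc.symm]
      simp
    have hPb : ∀ b ∈ q, P b = -b := by
      intro b hb
      simp only [hPdef, LinearMap.sub_apply, LinearMap.comp_apply, Submodule.coe_subtype]
      rw [show b = ((⟨b, hb⟩ : q) : E) from rfl,
        Submodule.projectionOnto_apply_left hc.symm,
        Submodule.projectionOnto_apply_right hc]
      simp
    have hdec : ∀ x : E, ∃ a b, a ∈ p ∧ b ∈ q ∧ x = a + b := by
      intro x
      exact ⟨π₁ x, π₂ x, (π₁ x).2, (π₂ x).2,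
        (Submodule.projection_add_projection_eq_self hc x).symm⟩
    refine ⟨P, ?_, ?_, ?_, ?_⟩
    · ext x
      obtain ⟨a, b, ha, hb, rfl⟩ := hdec x
      have h1 : P (a + b) = a - b := by
        rw [map_add, hPa a ha, hPb b hb, sub_eq_add_neg]
      simp only [Module.End.mul_apply, Module.End.one_apply, h1, map_sub, hPa a ha, hPb b hb]
      abel
    · intro x y
      obtain ⟨a, b, ha, hb, rfl⟩ := hdec x
      obtain ⟨c, d, hc', hd, rfl⟩ := hdec y
      have h1 : P (a + b) = a - b := by
        rw [map_add, hPa a ha, hPb b hb, sub_eq_add_neg]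
      have h2' : P (c + d) = c - d := by
        rw [map_add, hPa c hc', hPb d hd, sub_eq_add_neg]
      rw [h1, h2']
      simp only [map_add, map_sub, LinearMap.add_apply, LinearMap.sub_apply,
        hPa _ (hp a ha c hc'), hPb _ (hq b hb d hd)]
      abel
    · have hker1 : LinearMap.ker (P - 1) = p := by
        ext x
        constructor
        · intro hx
          have hx' : P x = x := by
            have := hx
            simp only [LinearMap.mem_ker, LinearMap.sub_apply, Module.End.one_apply,
              sub_eq_zero] at this
            exact this
          obtain ⟨a, b, ha, hb, rfl⟩ := hdec x
          rw [map_add, hPa a ha, hPb b hb] at hx'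
          have hb0 : b = 0 := by
            refine htf b ?_
            have : a + -b - (a + b) = 0 := by rw [hx']; abel
            calc b + b = -(a + -b - (a + b)) := by abel
            _ = 0 := by rw [this]; simp
          rw [hb0, add_zero]; exact ha
        · intro hx
          simp only [LinearMap.mem_ker, LinearMap.sub_apply, Module.End.one_apply,
            sub_eq_zero]
          exact hPa x hx
      have hker2 : LinearMap.ker (P + 1) = q := by
        ext x
        constructor
        · intro hx
          have hx' : P x = -x := by
            have := hx
            simp only [LinearMap.mem_ker, LinearMap.add_apply, Module.End.one_apply,
              add_eq_zero_iff_eq_neg] at this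
            exact this
          obtain ⟨a, b, ha, hb, rfl⟩ := hdec x
          rw [map_add, hPa a ha, hPb b hb] at hx'
          have ha0 : a = 0 := by
            refine htf a ?_
            have : a + -b - (-(a + b)) = 0 := by rw [hx']; abel
            calc a + a = a + -b - (-(a + b)) := by abel
            _ = 0 := this
          rw [ha0, zero_add]; exact hb
        · intro hx
          simp only [LinearMap.mem_ker, LinearMap.add_apply, Module.End.one_apply,
            add_eq_zero_iff_eq_neg]
          exact hPb x hx
      rw [hker1, hker2]
      -- p and q have equal dimension since both are isotropic and complementary
      have hinj : ∀ (r s : Submodule K E), IsCompl r s → (∀ x ∈ r, ∀ y ∈ r, B x y = 0) →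
          Module.finrank K r ≤ Module.finrank K s := by
        intro r s hrs hBr
        set f : r →ₗ[K] Module.Dual K s := s.subtype.dualMap ∘ₗ B ∘ₗ r.subtype with hf
        have hfinj : Function.Injective f := by
          rw [injective_iff_map_eq_zero]
          intro a hfa
          have hz : ∀ y : E, B (a : E) y = 0 := by
            intro y
            have hy : y ∈ r ⊔ s := by rw [hrs.sup_eq_top]; trivial
            obtain ⟨c, hcr, d, hds, rfl⟩ := Submodule.mem_sup.mp hy
            have h1 : B (a : E) c = 0 := hBr a a.2 c hcr
            have h2 : B (a : E) d = 0 := by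
              have := LinearMap.ext_iff.mp hfa ⟨d, hds⟩
              simpa [hf] using this
            rw [map_add, h1, h2, add_zero]
          have : (a : E) = 0 := hnd _ hz
          exact Subtype.ext this
        calc Module.finrank K r ≤ Module.finrank K (Module.Dual K s) :=
              LinearMap.finrank_le_finrank_of_injective hfinj
        _ = Module.finrank K s := Subspace.dual_finrank_eq
      exact le_antisymm (hinj p q hc hBp) (hinj q p hc.symm hBq)
    · intro x y
      obtain ⟨a, b, ha, hb, rfl⟩ := hdec x
      obtain ⟨c, d, hc', hd, rfl⟩ := hdec y
      have h1 : P (a + b) = a - b := by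
        rw [map_add, hPa a ha, hPb b hb, sub_eq_add_neg]
      have h2' : P (c + d) = c - d := by
        rw [map_add, hPa c hc', hPb d hd, sub_eq_add_neg]
      rw [h1, h2']
      simp only [map_add, map_sub, LinearMap.add_apply, LinearMap.sub_apply,
        hBp a ha c hc', hBq b hb d hd]
      ring
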